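/- Let λ ∈ ℂ and suppose 𝕊_k(λ) has block form [[A_k, B_k],[C_k + λW_k A_k, D_k + λW_k B_k]] with n×n blocks satisfying 𝕊_k(λ̄)* J 𝕊_k(λ) = J for all λ ∈ ℂ and k ∈ ℕ₀ (so that Ψ_k = diag{W_k, 0}). If there exists an index l ≥ 1 such that B_{l-1}, W_{l-1}, and W_l are invertible, then the system z_k = 𝕊_k(λ) z_{k+1} is definite on ℕ₀; i.e., any solution z (for any fixed λ) with Ψ_k z_k = 0 for all k ∈ ℕ₀ vanishes identically. -/

import Mathlib

open Matrix

private lemma cancel_step {m : Type*} [Fintype m] [DecidableEq m]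
    (S : Matrix m m ℂ) (hS : IsUnit S.det) {a b : m → ℂ}
    (h : a = S *ᵥ b) (ha : a = 0) : b = 0 := by
  calc b = (1 : Matrix m m ℂ) *ᵥ b := by simp
    _ = (S⁻¹ * S) *ᵥ b := by rw [Matrix.nonsing_inv_mul S hS]
    _ = S⁻¹ *ᵥ (S *ᵥ b) := by rw [Matrix.mulVec_mulVec]
    _ = S⁻¹ *ᵥ a := by rw [← h]
    _ = 0 := by rw [ha, Matrix.mulVec_zero]

/-- Theorem 3.7: a sufficient condition for definiteness on `ℕ₀` for systems
with the special linear dependence on the spectral parameter. -/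
theorem stmt19 (n : ℕ)
    (J : Matrix (Fin n ⊕ Fin n) (Fin n ⊕ Fin n) ℂ)
    (hJ : J = Matrix.fromBlocks 0 1 (-1) 0)
    (A B C D W : ℕ → Matrix (Fin n) (Fin n) ℂ)
    (hsymp : ∀ (k : ℕ) (l : ℂ),
      (Matrix.fromBlocks (A k) (B k)
          (C k + (starRingEnd ℂ l) • (W k * A k))
          (D k + (starRingEnd ℂ l) • (W k * B k)))ᴴ * J *
        (Matrix.fromBlocks (A k) (B k)
          (C k + l • (W k * A k)) (D k + l • (W k * B k))) = J)
    (l' : ℕ) (hl' : 1 ≤ l')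
    (hB : IsUnit (B (l' - 1)).det)
    (hW1 : IsUnit (W (l' - 1)).det)
    (hW2 : IsUnit (W l').det) :
    ∀ (lam : ℂ) (z : ℕ → (Fin n ⊕ Fin n) → ℂ),
      (∀ k : ℕ, z k =
        (Matrix.fromBlocks (A k) (B k)
          (C k + lam • (W k * A k)) (D k + lam • (W k * B k))) *ᵥ z (k + 1)) →
      (∀ k : ℕ, (Matrix.fromBlocks (W k) (0 : Matrix (Fin n) (Fin n) ℂ) (0 : Matrix (Fin n) (Fin n) ℂ) (0 : Matrix (Fin n) (Fin n) ℂ)) *ᵥ z k = 0) →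
      ∀ k : ℕ, z k = 0 := by
  intro lam z hrec hpsi
  set S : ℕ → Matrix (Fin n ⊕ Fin n) (Fin n ⊕ Fin n) ℂ := fun k =>
    Matrix.fromBlocks (A k) (B k)
      (C k + lam • (W k * A k)) (D k + lam • (W k * B k)) with hSdef
  -- J is invertible
  have hJ1 : J * (-J) = 1 := by
    rw [hJ]
    ext (i | i) (j | j) <;>
      simp [Matrix.mul_apply, Matrix.fromBlocks, Matrix.one_apply, Fintype.sum_sum_type]
  have hJunit : IsUnit J.det := Matrix.isUnit_det_of_right_inverse hJ1
  -- each S k is invertible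
  have hSunit : ∀ k, IsUnit (S k).det := by
    intro k
    have h := hsymp k lam
    have hd := congrArg Matrix.det h
    rw [Matrix.det_mul, Matrix.det_mul] at hd
    rcases hJunit with ⟨u, hu⟩
    have hJne : J.det ≠ 0 := by rw [← hu]; exact u.ne_zero
    have h2 : (Matrix.fromBlocks (A k) (B k)
          (C k + (starRingEnd ℂ lam) • (W k * A k))
          (D k + (starRingEnd ℂ lam) • (W k * B k)))ᴴ.det * (S k).det * J.det
          = 1 * J.det := by linear_combination hd
    have h1 := mul_right_cancel₀ hJne h2
    exact IsUnit.of_mul_eq_one _ ((mul_comm _ _).trans h1)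
  -- the first component vanishes wherever W is invertible
  have hx : ∀ k, W k *ᵥ (z k ∘ Sum.inl) = 0 := by
    intro k
    have h := hpsi k
    rw [Matrix.fromBlocks_mulVec] at h
    have := congrFun h
    funext i
    simpa using this (Sum.inl i)
  have hx1 : z (l' - 1) ∘ Sum.inl = 0 := cancel_step (W (l' - 1)) hW1 (hx (l' - 1)).symm rfl
  have hx2 : z l' ∘ Sum.inl = 0 := cancel_step (W l') hW2 (hx l').symm rfl
  -- second component vanishes at l'
  have hrec' : z (l' - 1) = S (l' - 1) *ᵥ z l' := by
    have := hrec (l' - 1)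
    rwa [Nat.sub_add_cancel hl'] at this
  have hu2 : z l' ∘ Sum.inr = 0 := by
    apply cancel_step (B (l' - 1)) hB (b := z l' ∘ Sum.inr) _ rfl
    rw [hSdef] at hrec'
    simp only [Matrix.fromBlocks_mulVec] at hrec'
    funext i
    have h := congrFun hrec' (Sum.inl i)
    simp only [Sum.elim_inl, Pi.add_apply] at h
    have hxx : z (l' - 1) (Sum.inl i) = 0 := by simpa using congrFun hx1 i
    have hAA : (A (l' - 1) *ᵥ (z l' ∘ Sum.inl)) i = 0 := by
      rw [hx2, Matrix.mulVec_zero]; rfl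
    rw [hxx, hAA, zero_add] at h
    simpa using h
  have hzl : z l' = 0 := by
    funext i
    cases i with
    | inl i => exact congrFun hx2 i
    | inr i => exact congrFun hu2 i
  -- propagate forward
  have hfwd : ∀ m, z (l' + m) = 0 := by
    intro m
    induction m with
    | zero => exact hzl
    | succ m ih =>
      have := cancel_step (S (l' + m)) (hSunit (l' + m)) (hrec (l' + m)) ih
      simpa [Nat.add_assoc] using this
  -- propagate backward
  have hbwd : ∀ m, z (l' - m) = 0 := by
    intro m
    induction m with
    | zero => exact hzl
    | succ m ih =>
      by_cases hm : l' ≤ m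
      · have : l' - (m + 1) = l' - m := by omega
        rw [this]; exact ih
      · have heq : l' - (m + 1) + 1 = l' - m := by omega
        have := hrec (l' - (m + 1))
        rw [heq, ih, Matrix.mulVec_zero] at this
        exact this
  intro k
  rcases le_or_gt k l' with h | h
  · have : k = l' - (l' - k) := by omega
    rw [this]; exact hbwd _
  · have : k = l' + (k - l') := by omega
    rw [this]; exact hfwd _
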